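/- arXiv:0802.0292 — 3 statements merged into one kernel-verified Lean document; each statement's English description precedes it below -/
import Mathlib

section
/- Let μ_k be normalized Haar measure on U(k) and f_{ij}(u) the (i,j)-entry of u. If the integral over U(k) of f_{i₁j₁}(u)⋯f_{iₘjₘ}(u) · conj(f_{s₁t₁}(u))⋯conj(f_{sᵣtᵣ}(u)) is nonzero, then m = r, the tuple (i₁,…,iₘ) is a permutation of (s₁,…,sᵣ), and (j₁,…,jₘ) is a permutation of (t₁,…,tᵣ). -/
open MeasureTheory

noncomputable instance (k : ℕ) : MeasurableSpace (Matrix.unitaryGroup (Fin k) ℂ) := borel _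
instance (k : ℕ) : BorelSpace (Matrix.unitaryGroup (Fin k) ℂ) := ⟨rfl⟩

instance (k : ℕ) : SecondCountableTopology (Matrix (Fin k) (Fin k) ℂ) := by
  exact (inferInstance : SecondCountableTopology (Fin k → Fin k → ℂ))

instance (k : ℕ) : SecondCountableTopology (Matrix.unitaryGroup (Fin k) ℂ) :=
  TopologicalSpace.secondCountableTopology_induced (Matrix.unitaryGroup (Fin k) ℂ)
    (Matrix (Fin k) (Fin k) ℂ) Subtype.val

instance (k : ℕ) : IsTopologicalGroup (Matrix.unitaryGroup (Fin k) ℂ) where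
  continuous_mul := Continuous.subtype_mk
    ((continuous_subtype_val.comp continuous_fst).matrix_mul
      (continuous_subtype_val.comp continuous_snd)) _
  continuous_inv := Continuous.subtype_mk
    (continuous_star.comp continuous_subtype_val) _

instance (k : ℕ) : CompactSpace (Matrix.unitaryGroup (Fin k) ℂ) := by
  suffices h : IsCompact (Matrix.unitaryGroup (Fin k) ℂ : Set (Matrix (Fin k) (Fin k) ℂ)) from
    isCompact_iff_compactSpace.mp h
  have hS : IsCompact {M : Matrix (Fin k) (Fin k) ℂ | ∀ a b, M a b ∈ Metric.closedBall (0:ℂ) 1} := by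
    have : {M : Matrix (Fin k) (Fin k) ℂ | ∀ a b, M a b ∈ Metric.closedBall (0:ℂ) 1}
        = Set.pi Set.univ (fun _ : Fin k => Set.pi Set.univ
            fun _ : Fin k => Metric.closedBall (0:ℂ) 1) := by
      ext M
      constructor
      · exact fun h a _ b _ => h a b
      · exact fun h a b => h a (Set.mem_univ a) b (Set.mem_univ b)
    rw [this]
    exact isCompact_univ_pi fun _ => isCompact_univ_pi fun _ => isCompact_closedBall _ _
  apply IsCompact.of_isClosed_subset hS
  · have : (Matrix.unitaryGroup (Fin k) ℂ : Set (Matrix (Fin k) (Fin k) ℂ))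
        = (fun M : Matrix (Fin k) (Fin k) ℂ => M * star M) ⁻¹' {1} := by
      ext M; simpa using Matrix.mem_unitaryGroup_iff
    rw [this]
    exact IsClosed.preimage (continuous_id.matrix_mul continuous_star) isClosed_singleton
  · intro M hM a b
    simpa [Complex.dist_eq] using entry_norm_bound_of_unitary hM a b

/-- A left-invariant Haar probability measure on a compact second countable group
is also right invariant. -/
lemma haar_right_invariant {G : Type*} [Group G] [TopologicalSpace G] [IsTopologicalGroup G]
    [CompactSpace G] [SecondCountableTopology G] [MeasurableSpace G] [BorelSpace G]
    (μ : Measure G) [μ.IsHaarMeasure] [IsProbabilityMeasure μ] :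
    μ.IsMulRightInvariant := by
  constructor
  intro g
  have hne : Nonempty G := ⟨1⟩
  let K₀ : TopologicalSpace.PositiveCompacts G :=
    ⟨⟨Set.univ, isCompact_univ⟩, by simp [Set.univ_nonempty]⟩
  set ν := Measure.map (· * g) μ with hν
  have hmeas : Measurable (· * g : G → G) := (continuous_mul_right g).measurable
  have hprob : IsProbabilityMeasure ν := Measure.isProbabilityMeasure_map hmeas.aemeasurable
  have h1 : ν = ν K₀ • Measure.haarMeasure K₀ := Measure.haarMeasure_unique ν K₀
  have h2 : μ = μ K₀ • Measure.haarMeasure K₀ := Measure.haarMeasure_unique μ K₀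
  have e1 : ν K₀ = 1 := by show ν Set.univ = 1; simp
  have e2 : μ K₀ = 1 := by show μ Set.univ = 1; simp
  rw [e1] at h1; rw [e2] at h2
  rw [h1, ← h2]

lemma conj_exp_mul_I (x : ℝ) :
    (starRingEnd ℂ) (Complex.exp (x * Complex.I)) = Complex.exp (-(x * Complex.I)) := by
  rw [← Complex.exp_conj, map_mul, Complex.conj_I, Complex.conj_ofReal, mul_neg]

/-- The diagonal unitary matrix with phases `c`. -/
noncomputable def dU (k : ℕ) (c : Fin k → ℝ) : Matrix.unitaryGroup (Fin k) ℂ :=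
  ⟨Matrix.diagonal fun a => Complex.exp (c a * Complex.I), by
    rw [Matrix.mem_unitaryGroup_iff, Matrix.star_eq_conjTranspose,
      Matrix.diagonal_conjTranspose, Matrix.diagonal_mul_diagonal]
    have : (fun a => Complex.exp (c a * Complex.I)
        * (star fun a => Complex.exp (c a * Complex.I)) a) = fun _ : Fin k => (1 : ℂ) := by
      funext a
      show Complex.exp (c a * Complex.I) * (starRingEnd ℂ) (Complex.exp (c a * Complex.I)) = 1
      rw [conj_exp_mul_I, ← Complex.exp_add, add_neg_cancel, Complex.exp_zero]
    rw [this, Matrix.diagonal_one]⟩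

lemma dU_mul_apply {k : ℕ} (c : Fin k → ℝ) (u : Matrix.unitaryGroup (Fin k) ℂ) (a b : Fin k) :
    ((dU k c * u : Matrix.unitaryGroup (Fin k) ℂ) : Matrix (Fin k) (Fin k) ℂ) a b
      = Complex.exp (c a * Complex.I) * (u : Matrix (Fin k) (Fin k) ℂ) a b := by
  have : ((dU k c * u : Matrix.unitaryGroup (Fin k) ℂ) : Matrix (Fin k) (Fin k) ℂ)
      = Matrix.diagonal (fun a => Complex.exp (c a * Complex.I)) * (u : Matrix (Fin k) (Fin k) ℂ) := rfl
  rw [this, Matrix.diagonal_mul]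

lemma mul_dU_apply {k : ℕ} (c : Fin k → ℝ) (u : Matrix.unitaryGroup (Fin k) ℂ) (a b : Fin k) :
    ((u * dU k c : Matrix.unitaryGroup (Fin k) ℂ) : Matrix (Fin k) (Fin k) ℂ) a b
      = (u : Matrix (Fin k) (Fin k) ℂ) a b * Complex.exp (c b * Complex.I) := by
  have : ((u * dU k c : Matrix.unitaryGroup (Fin k) ℂ) : Matrix (Fin k) (Fin k) ℂ)
      = (u : Matrix (Fin k) (Fin k) ℂ) * Matrix.diagonal (fun a => Complex.exp (c a * Complex.I)) := rfl
  rw [this, Matrix.mul_diagonal]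

lemma exists_equiv_of_counts {k m r : ℕ} (i : Fin m → Fin k) (s : Fin r → Fin k)
    (hc : ∀ a, (Finset.univ.filter fun l => i l = a).card
      = (Finset.univ.filter fun l => s l = a).card) :
    ∃ e : Fin m ≃ Fin r, ∀ l, i l = s (e l) := by
  have E : ∀ a : Fin k, {l // i l = a} ≃ {l // s l = a} := fun a =>
    Fintype.equivOfCardEq (by
      rw [Fintype.card_subtype, Fintype.card_subtype]
      exact hc a)
  exact ⟨Equiv.ofFiberEquiv E, fun l => (Equiv.ofFiberEquiv_map E l).symm⟩

lemma nat_eq_of_exp (A B : ℕ)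
    (h : ∀ θ : ℝ, Complex.exp ((θ * A - θ * B : ℝ) * Complex.I) = 1) : A = B := by
  by_contra hne
  have hd : (A : ℝ) - B ≠ 0 := sub_ne_zero.2 fun hh => hne (Nat.cast_injective hh)
  have h2 := h (Real.pi / ((A : ℝ) - B))
  rw [show (Real.pi / ((A:ℝ) - B) * A - Real.pi / ((A:ℝ) - B) * B : ℝ) = Real.pi by
    field_simp] at h2
  rw [Complex.exp_pi_mul_I] at h2
  norm_num at h2

lemma sum_indicator_eq {n k : ℕ} (f : Fin n → Fin k) (a : Fin k) (θ : ℝ) :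
    (∑ l, if f l = a then θ else 0)
      = θ * ((Finset.univ.filter fun l => f l = a).card : ℝ) := by
  rw [Finset.sum_ite, Finset.sum_const, Finset.sum_const_zero, add_zero, nsmul_eq_mul, mul_comm]

/-- From a nonzero integral, every diagonal-phase factor must be `1`. -/
lemma phase_eq_one {k m r : ℕ} (μ : Measure (Matrix.unitaryGroup (Fin k) ℂ))
    [μ.IsHaarMeasure] [IsProbabilityMeasure μ]
    (i j : Fin m → Fin k) (s t : Fin r → Fin k)
    (h : (∫ u, (∏ l, (u : Matrix (Fin k) (Fin k) ℂ) (i l) (j l)) *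
        ∏ l, (starRingEnd ℂ) ((u : Matrix (Fin k) (Fin k) ℂ) (s l) (t l)) ∂μ) ≠ 0) :
    (∀ c : Fin k → ℝ,
        Complex.exp ((((∑ l, c (i l)) - ∑ l, c (s l) : ℝ)) * Complex.I) = 1) ∧
    (∀ c : Fin k → ℝ,
        Complex.exp ((((∑ l, c (j l)) - ∑ l, c (t l) : ℝ)) * Complex.I) = 1) := by
  have hri : μ.IsMulRightInvariant := haar_right_invariant μ
  set F : Matrix.unitaryGroup (Fin k) ℂ → ℂ := fun u =>
    (∏ l, (u : Matrix (Fin k) (Fin k) ℂ) (i l) (j l)) *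
      ∏ l, (starRingEnd ℂ) ((u : Matrix (Fin k) (Fin k) ℂ) (s l) (t l)) with hF
  have cancel : ∀ p : ℂ, p * (∫ u, F u ∂μ) = (∫ u, F u ∂μ) → p = 1 := by
    intro p hp
    have : p * (∫ u, F u ∂μ) = 1 * (∫ u, F u ∂μ) := by rw [hp, one_mul]
    exact mul_right_cancel₀ h this
  constructor
  · intro c
    have key : ∀ u, F (dU k c * u)
        = Complex.exp ((((∑ l, c (i l)) - ∑ l, c (s l) : ℝ)) * Complex.I) * F u := by
      intro u
      simp only [hF, dU_mul_apply, map_mul, conj_exp_mul_I, Finset.prod_mul_distrib,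
        ← Complex.exp_sum]
      rw [show ((((∑ l, c (i l)) - ∑ l, c (s l) : ℝ)) : ℂ)
          = (∑ l, (c (i l) : ℂ)) - ∑ l, (c (s l) : ℂ) by push_cast; ring]
      rw [Finset.sum_neg_distrib, ← Finset.sum_mul, ← Finset.sum_mul, sub_mul,
        Complex.exp_sub, Complex.exp_neg, div_eq_mul_inv]
      ring
    have h2 : ∫ u, F (dU k c * u) ∂μ
        = Complex.exp ((((∑ l, c (i l)) - ∑ l, c (s l) : ℝ)) * Complex.I) * ∫ u, F u ∂μ := by
      simp only [key]
      exact integral_const_mul _ _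
    exact cancel _ (by rw [← h2, integral_mul_left_eq_self F (dU k c)])
  · intro c
    have key : ∀ u, F (u * dU k c)
        = Complex.exp ((((∑ l, c (j l)) - ∑ l, c (t l) : ℝ)) * Complex.I) * F u := by
      intro u
      simp only [hF, mul_dU_apply, map_mul, conj_exp_mul_I, Finset.prod_mul_distrib,
        ← Complex.exp_sum]
      rw [show ((((∑ l, c (j l)) - ∑ l, c (t l) : ℝ)) : ℂ)
          = (∑ l, (c (j l) : ℂ)) - ∑ l, (c (t l) : ℂ) by push_cast; ring]
      rw [Finset.sum_neg_distrib, ← Finset.sum_mul, ← Finset.sum_mul, sub_mul,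
        Complex.exp_sub, Complex.exp_neg, div_eq_mul_inv]
      ring
    have h2 : ∫ u, F (u * dU k c) ∂μ
        = Complex.exp ((((∑ l, c (j l)) - ∑ l, c (t l) : ℝ)) * Complex.I) * ∫ u, F u ∂μ := by
      simp only [key]
      exact integral_const_mul _ _
    exact cancel _ (by rw [← h2, integral_mul_right_eq_self F (dU k c)])

/-- If `∫ f_{i₁j₁}(u)⋯f_{iₘjₘ}(u) conj(f_{s₁t₁}(u))⋯conj(f_{sᵣtᵣ}(u)) dμ(u) ≠ 0`
for the normalized Haar measure `μ` on `U(k)`, then `m = r`, `(i₁,…,iₘ)` is a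
permutation of `(s₁,…,sᵣ)`, and `(j₁,…,jₘ)` is a permutation of `(t₁,…,tᵣ)`. -/
theorem haar_moment_ne_zero_perm (k m r : ℕ)
    (μ : Measure (Matrix.unitaryGroup (Fin k) ℂ))
    [μ.IsHaarMeasure] [IsProbabilityMeasure μ]
    (i j : Fin m → Fin k) (s t : Fin r → Fin k)
    (h : (∫ u, (∏ l, (u : Matrix (Fin k) (Fin k) ℂ) (i l) (j l)) *
        ∏ l, (starRingEnd ℂ) ((u : Matrix (Fin k) (Fin k) ℂ) (s l) (t l)) ∂μ) ≠ 0) :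
    m = r ∧ (∃ e : Fin m ≃ Fin r, ∀ l, i l = s (e l)) ∧
      (∃ e : Fin m ≃ Fin r, ∀ l, j l = t (e l)) := by
  have hp := phase_eq_one μ i j s t h
  have hrow : ∀ a, (Finset.univ.filter fun l => i l = a).card
      = (Finset.univ.filter fun l => s l = a).card := by
    intro a
    apply nat_eq_of_exp
    intro θ
    have h1 := hp.1 (fun x => if x = a then θ else 0)
    rw [sum_indicator_eq i a θ, sum_indicator_eq s a θ] at h1
    exact h1
  have hcol : ∀ a, (Finset.univ.filter fun l => j l = a).card
      = (Finset.univ.filter fun l => t l = a).card := by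
    intro a
    apply nat_eq_of_exp
    intro θ
    have h1 := hp.2 (fun x => if x = a then θ else 0)
    rw [sum_indicator_eq j a θ, sum_indicator_eq t a θ] at h1
    exact h1
  obtain ⟨e1, he1⟩ := exists_equiv_of_counts i s hrow
  obtain ⟨e2, he2⟩ := exists_equiv_of_counts j t hcol
  exact ⟨by simpa using Fintype.card_congr e1, ⟨e1, he1⟩, ⟨e2, he2⟩⟩
end

section
/- Let F, G be disjoint finite sets with |F| = n, |G| = m, let H = {1,…,k}, and let f_i : H → ℂ (i ∈ F) and g_j : H → ℂ (j ∈ G) be functions such that Σ_{a=1}^k f_i(a) = 0 for every i ∈ F. Then the absolute value of the sum, over all injections σ : F ∪ G → H, of (∏_{i∈F} f_i(σ(i)))·(∏_{j∈G} g_j(σ(j))), is at most k^{m + n/2}·(n+m)^n·∏_{i∈F}‖f_i‖_∞·∏_{j∈G}‖g_j‖_∞. -/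
open Finset

noncomputable def T (k : ℕ) : List ℕ → Finset (Fin k) → (ℕ → Fin k → ℂ) → ℂ
  | [], _, _ => 1
  | i :: l, A, f => ∑ a ∈ A, f i a * T k l (A.erase a) f

@[simp] lemma T_nil (k : ℕ) (A f) : T k [] A f = 1 := rfl
@[simp] lemma T_cons (k : ℕ) (i l A f) :
    T k (i :: l) A f = ∑ a ∈ A, f i a * T k l (A.erase a) f := rfl

lemma T_congr (k : ℕ) (l : List ℕ) (A : Finset (Fin k)) (f f' : ℕ → Fin k → ℂ)
    (h : ∀ i ∈ l, f i = f' i) : T k l A f = T k l A f' := by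
  induction l generalizing A with
  | nil => rfl
  | cons i l ih =>
    simp only [T_cons, h i (by simp)]
    exact Finset.sum_congr rfl fun a _ => by rw [ih _ (fun j hj => h j (by simp [hj]))]

lemma T_pull (k : ℕ) (i0 : ℕ) (l : List ℕ) (hnd : (i0 :: l).Nodup) (A : Finset (Fin k))
    (f : ℕ → Fin k → ℂ) :
    T k (l ++ [i0]) A f = (∑ a ∈ A, f i0 a) * T k l A f
      - ∑ j ∈ l.toFinset, T k l A (Function.update f j (fun a => f j a * f i0 a)) := by
  induction l generalizing A f with
  | nil => simp [T]
  | cons i l ih =>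
    have hnd' : (i0 :: l).Nodup := by
      simp only [List.nodup_cons, List.mem_cons] at hnd ⊢
      exact ⟨fun h => hnd.1 (Or.inr h), hnd.2.2⟩
    have hii0 : i0 ≠ i := by
      simp only [List.nodup_cons, List.mem_cons] at hnd; exact fun h => hnd.1 (Or.inl h)
    have hil : i ∉ l := by
      simp only [List.nodup_cons] at hnd; exact hnd.2.1
    have hilf : i ∉ l.toFinset := by simpa using hil
    have h1 : T k (i :: l) A (Function.update f i (fun a => f i a * f i0 a))
        = ∑ a ∈ A, (f i a * f i0 a) * T k l (A.erase a) f := by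
      simp only [T_cons, Function.update_self]
      refine Finset.sum_congr rfl fun a _ => ?_
      congr 1
      refine T_congr _ _ _ _ _ fun j hj => ?_
      exact Function.update_of_ne (ne_of_mem_of_not_mem hj hil) _ _
    have h2 : ∀ j ∈ l.toFinset, T k (i :: l) A (Function.update f j (fun a => f j a * f i0 a))
        = ∑ a ∈ A, f i a * T k l (A.erase a)
            (Function.update f j (fun a => f j a * f i0 a)) := by
      intro j hj
      simp only [T_cons]
      refine Finset.sum_congr rfl fun a _ => ?_
      rw [Function.update_of_ne
        (Ne.symm (ne_of_mem_of_not_mem (List.mem_toFinset.mp hj) hil))]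
    have expand : ∀ a ∈ A, f i a * T k (l ++ [i0]) (A.erase a) f
        = (∑ b ∈ A, f i0 b) * (f i a * T k l (A.erase a) f)
          - (f i a * f i0 a) * T k l (A.erase a) f
          - ∑ j ∈ l.toFinset, f i a * T k l (A.erase a)
              (Function.update f j (fun b => f j b * f i0 b)) := by
      intro a ha
      rw [ih hnd', Finset.sum_erase_eq_sub ha, mul_sub, Finset.mul_sum]
      ring_nf
    conv_lhs => rw [List.cons_append, T_cons]
    rw [Finset.sum_congr rfl expand, Finset.sum_sub_distrib, Finset.sum_sub_distrib,
      ← Finset.mul_sum, Finset.sum_comm]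
    conv_rhs => rw [List.toFinset_cons, Finset.sum_insert hilf, h1,
      Finset.sum_congr rfl h2, T_cons]
    rw [sub_sub]

lemma T_swap (k : ℕ) (i j : ℕ) (l : List ℕ) (A : Finset (Fin k)) (f) :
    T k (i :: j :: l) A f = T k (j :: i :: l) A f := by
  simp only [T_cons, Finset.mul_sum]
  rw [Finset.sum_comm' (s := A) (t := fun a => A.erase a) (t' := A) (s' := fun b => A.erase b)
    (f := fun a b => f i a * (f j b * T k l ((A.erase a).erase b) f))]
  · refine Finset.sum_congr rfl fun b hb => Finset.sum_congr rfl fun a ha => ?_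
    rw [Finset.erase_right_comm]
    ring
  · intro a b
    simp only [Finset.mem_erase]
    tauto

lemma T_perm (k : ℕ) {l l' : List ℕ} (h : l.Perm l') (A : Finset (Fin k)) (f) :
    T k l A f = T k l' A f := by
  induction h generalizing A with
  | nil => rfl
  | cons x _ ih => simp only [T_cons]; exact Finset.sum_congr rfl fun a _ => by rw [ih]
  | swap x y l => exact T_swap k y x l A f
  | trans h1 h2 ih1 ih2 => rw [ih1, ih2]

lemma prod_map_nonneg {l : List ℕ} {M : ℕ → ℝ} (hM : ∀ i ∈ l, 0 ≤ M i) :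
    0 ≤ (l.map M).prod := by
  apply List.prod_nonneg
  intro x hx
  obtain ⟨i, hi, rfl⟩ := List.mem_map.mp hx
  exact hM i hi

lemma T_norm_le (k : ℕ) (l : List ℕ) (A : Finset (Fin k)) (f : ℕ → Fin k → ℂ) (M : ℕ → ℝ)
    (hM : ∀ i ∈ l, 0 ≤ M i) (hb : ∀ i ∈ l, ∀ a, ‖f i a‖ ≤ M i) :
    ‖T k l A f‖ ≤ (k : ℝ) ^ l.length * (l.map M).prod := by
  induction l generalizing A with
  | nil => simp
  | cons i l ih =>
    have hMi : 0 ≤ M i := hM i (by simp)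
    have hP : 0 ≤ (l.map M).prod := prod_map_nonneg (fun j hj => hM j (by simp [hj]))
    calc ‖T k (i :: l) A f‖ ≤ ∑ a ∈ A, ‖f i a * T k l (A.erase a) f‖ := by
          rw [T_cons]; exact norm_sum_le _ _
      _ ≤ ∑ a ∈ A, M i * ((k : ℝ) ^ l.length * (l.map M).prod) := by
          refine Finset.sum_le_sum fun a _ => ?_
          rw [norm_mul]
          exact mul_le_mul (hb i (by simp) a)
            (ih (A.erase a) (fun j hj => hM j (by simp [hj]))
              (fun j hj => hb j (by simp [hj])))
            (norm_nonneg _) hMi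
      _ = A.card * (M i * ((k : ℝ) ^ l.length * (l.map M).prod)) := by
          rw [Finset.sum_const, nsmul_eq_mul]
      _ ≤ k * (M i * ((k : ℝ) ^ l.length * (l.map M).prod)) := by
          refine mul_le_mul_of_nonneg_right ?_ (by positivity)
          exact_mod_cast (Finset.card_le_univ A).trans_eq (by simp)
      _ = (k : ℝ) ^ (i :: l).length * ((i :: l).map M).prod := by
          simp [List.length_cons, pow_succ]
          ring

lemma arith_step (k m d e : ℕ) (hk : 1 ≤ k) :
    ((m : ℝ) + e) * ((k:ℝ) ^ ((e:ℝ) + d/2) * ((m:ℝ) + d + e) ^ d)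
      + (d : ℝ) * ((k:ℝ) ^ ((e:ℝ) + 1 + (↑(d-1))/2) * ((m:ℝ) + d + e) ^ (d-1))
    ≤ (k:ℝ) ^ ((e:ℝ) + ((d:ℝ)+1)/2) * ((m:ℝ) + ((d:ℝ)+1) + e) ^ (d+1) := by
  have hk1 : (1:ℝ) ≤ (k:ℝ) := by exact_mod_cast hk
  have hm0 : (0:ℝ) ≤ (m:ℝ) := Nat.cast_nonneg m
  have he0 : (0:ℝ) ≤ (e:ℝ) := Nat.cast_nonneg e
  have hd0 : (0:ℝ) ≤ (d:ℝ) := Nat.cast_nonneg d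
  have hB : (0:ℝ) ≤ (m:ℝ) + d + e := by positivity
  have hB1 : (m:ℝ) + d + e ≤ (m:ℝ) + ((d:ℝ)+1) + e := by linarith
  have hB1' : (1:ℝ) ≤ (m:ℝ) + ((d:ℝ)+1) + e := by linarith
  have hp1 : (k:ℝ) ^ ((e:ℝ) + d/2) ≤ (k:ℝ) ^ ((e:ℝ) + ((d:ℝ)+1)/2) := by
    apply Real.rpow_le_rpow_of_exponent_le hk1; linarith
  have hp0 : (0:ℝ) ≤ (k:ℝ) ^ ((e:ℝ) + ((d:ℝ)+1)/2) := by positivity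
  have hq : ((m:ℝ) + d + e) ^ d ≤ ((m:ℝ) + ((d:ℝ)+1) + e) ^ d :=
    pow_le_pow_left₀ hB hB1 d
  rcases Nat.eq_zero_or_pos d with hd | hd
  · subst hd
    simp only [Nat.cast_zero, pow_zero, mul_one, zero_mul, add_zero, zero_add,
      pow_one] at hp1 hp0 ⊢
    have h6 := mul_le_mul_of_nonneg_left hp1 (add_nonneg hm0 he0)
    nlinarith [h6, hp0]
  · have hp2 : (k:ℝ) ^ ((e:ℝ) + 1 + (↑(d-1))/2) = (k:ℝ) ^ ((e:ℝ) + ((d:ℝ)+1)/2) := by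
      congr 1
      have hc : ((d-1 : ℕ) : ℝ) = (d:ℝ) - 1 := by
        have h1 : (1:ℕ) ≤ d := hd
        push_cast [h1]; ring
      rw [hc]; ring
    have hq2 : ((m:ℝ) + d + e) ^ (d-1) ≤ ((m:ℝ) + ((d:ℝ)+1) + e) ^ d := by
      calc ((m:ℝ) + d + e) ^ (d-1) ≤ ((m:ℝ) + ((d:ℝ)+1) + e) ^ (d-1) :=
            pow_le_pow_left₀ hB hB1 _
        _ ≤ ((m:ℝ) + ((d:ℝ)+1) + e) ^ d := pow_le_pow_right₀ hB1' (by omega)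
    rw [hp2]
    set Z := (k:ℝ) ^ ((e:ℝ) + ((d:ℝ)+1)/2) * ((m:ℝ) + ((d:ℝ)+1) + e) ^ d with hZ
    have hZ0 : 0 ≤ Z := by rw [hZ]; positivity
    have key : ((m:ℝ) + e) * ((k:ℝ) ^ ((e:ℝ) + d/2) * ((m:ℝ) + d + e) ^ d)
        ≤ ((m:ℝ) + e) * Z :=
      mul_le_mul_of_nonneg_left (mul_le_mul hp1 hq (by positivity) hp0) (by linarith)
    have key2 : (d:ℝ) * ((k:ℝ) ^ ((e:ℝ) + ((d:ℝ)+1)/2) * ((m:ℝ) + d + e) ^ (d-1))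
        ≤ (d:ℝ) * Z :=
      mul_le_mul_of_nonneg_left (mul_le_mul_of_nonneg_left hq2 hp0) hd0
    calc ((m : ℝ) + e) * ((k:ℝ) ^ ((e:ℝ) + d/2) * ((m:ℝ) + d + e) ^ d)
          + (d : ℝ) * ((k:ℝ) ^ ((e:ℝ) + ((d:ℝ)+1)/2) * ((m:ℝ) + d + e) ^ (d-1))
        ≤ ((m:ℝ) + e) * Z + (d:ℝ) * Z := add_le_add key key2
      _ = (((m:ℝ) + e) + d) * Z := by ring
      _ ≤ ((m:ℝ) + ((d:ℝ)+1) + e) * Z := mul_le_mul_of_nonneg_right (by linarith) hZ0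
      _ = (k:ℝ) ^ ((e:ℝ) + ((d:ℝ)+1)/2) * ((m:ℝ) + ((d:ℝ)+1) + e) ^ (d+1) := by
          rw [hZ]; ring

lemma prod_map_cons_of_perm {l R : List ℕ} {j : ℕ} (h : l.Perm (j :: R)) (M : ℕ → ℝ) :
    (l.map M).prod = M j * (R.map M).prod := by
  rw [(h.map M).prod_eq]; simp

lemma prod_map_update {R : List ℕ} {j : ℕ} (hj : j ∉ R) (M : ℕ → ℝ) (v : ℝ) :
    (R.map (Function.update M j v)).prod = (R.map M).prod := by
  congr 1
  apply List.map_congr_left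
  intro i hi
  exact Function.update_of_ne (ne_of_mem_of_not_mem hi hj) _ _

lemma key_lemma (k m : ℕ) (hk : 1 ≤ k) :
    ∀ (N : ℕ) (lD lE : List ℕ) (A : Finset (Fin k)) (f : ℕ → Fin k → ℂ) (M : ℕ → ℝ),
    lD.length + lE.length = N →
    (lD ++ lE).Nodup →
    (∀ i ∈ lD ++ lE, 0 ≤ M i) →
    (∀ i ∈ lD ++ lE, ∀ a, ‖f i a‖ ≤ M i) →
    (∀ i ∈ lD, ‖∑ a ∈ A, f i a‖ ≤ (m : ℝ) * M i) →
    ‖T k (lD ++ lE) A f‖ ≤ (k : ℝ) ^ ((lE.length : ℝ) + (lD.length : ℝ)/2)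
      * ((m : ℝ) + lD.length + lE.length) ^ lD.length * ((lD ++ lE).map M).prod := by
  intro N
  induction N using Nat.strong_induction_on with
  | _ N ih =>
  intro lD lE A f M hN hnd hM hb hfresh
  cases lD with
  | nil =>
    simp only [List.nil_append, List.length_nil, Nat.cast_zero, zero_div, add_zero, pow_zero,
      mul_one]
    rw [Real.rpow_natCast]
    exact T_norm_le k lE A f M hM hb
  | cons i0 lD' =>
    have hNN : lD'.length + 1 + lE.length = N := by simpa using hN
    have hl'eq : (i0 :: lD') ++ lE = i0 :: (lD' ++ lE) := rfl
    set l' : List ℕ := lD' ++ lE with hl'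
    have hndl : (i0 :: l').Nodup := by rw [← hl'eq]; exact hnd
    have hi0l' : i0 ∉ l' := (List.nodup_cons.mp hndl).1
    have hndl' : l'.Nodup := (List.nodup_cons.mp hndl).2
    obtain ⟨hndD, hndE, hdisjDE⟩ := List.nodup_append'.mp hndl'
    have hMi0 : 0 ≤ M i0 := hM i0 (by simp)
    have hP' : 0 ≤ (l'.map M).prod :=
      prod_map_nonneg (fun i hi => hM i (by rw [hl'eq]; exact List.mem_cons_of_mem _ hi))
    have hmeml' : ∀ i ∈ l', i ∈ (i0 :: lD') ++ lE := by
      intro i hi; rw [hl'eq]; exact List.mem_cons_of_mem _ hi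
    have h1 : ‖T k l' A f‖ ≤ (k : ℝ) ^ ((lE.length : ℝ) + (lD'.length : ℝ)/2)
        * ((m : ℝ) + lD'.length + lE.length) ^ lD'.length * (l'.map M).prod := by
      exact ih (lD'.length + lE.length) (by omega) lD' lE A f M rfl hndl'
        (fun i hi => hM i (hmeml' i hi)) (fun i hi => hb i (hmeml' i hi))
        (fun i hi => hfresh i (List.mem_cons_of_mem _ hi))
    have h2 : ∀ j ∈ lD'.toFinset,
        ‖T k l' A (Function.update f j (fun a => f j a * f i0 a))‖
        ≤ (k:ℝ) ^ ((lE.length:ℝ) + 1 + (↑(lD'.length-1))/2)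
          * ((m:ℝ) + lD'.length + lE.length) ^ (lD'.length-1)
          * (M i0 * (l'.map M).prod) := by
      intro j hj
      have hjD : j ∈ lD' := List.mem_toFinset.mp hj
      have hjl' : j ∈ l' := List.mem_append_left _ hjD
      have hd1 : 1 ≤ lD'.length := List.length_pos_of_mem hjD
      have hjE : j ∉ lE := fun h => hdisjDE hjD h
      set f' := Function.update f j (fun a => f j a * f i0 a) with hf'
      set M' := Function.update M j (M j * M i0) with hM'
      set L1 := lD'.erase j with hL1
      have hperm : l'.Perm (L1 ++ (j :: lE)) :=
        ((List.perm_cons_erase hjD).append_right lE).trans List.perm_middle.symm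
      have hpermR : l'.Perm (j :: (L1 ++ lE)) :=
        (List.perm_cons_erase hjD).append_right lE
      have hjL1 : j ∉ L1 := hndD.not_mem_erase
      have hjR : j ∉ L1 ++ lE := by
        simp only [List.mem_append]; rintro (h | h); exacts [hjL1 h, hjE h]
      have hndP : (L1 ++ (j :: lE)).Nodup := hperm.nodup_iff.mp hndl'
      have hlen1 : L1.length = lD'.length - 1 := List.length_erase_of_mem hjD
      have hmemP : ∀ i ∈ L1 ++ (j :: lE), i ∈ l' := fun i hi => hperm.mem_iff.mpr hi
      have hM'' : ∀ i ∈ L1 ++ (j :: lE), 0 ≤ M' i := by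
        intro i hi
        rcases eq_or_ne i j with rfl | hij
        · rw [hM', Function.update_self]
          exact mul_nonneg (hM i (hmeml' _ hjl')) hMi0
        · rw [hM', Function.update_of_ne hij]
          exact hM i (hmeml' _ (hmemP i hi))
      have hb'' : ∀ i ∈ L1 ++ (j :: lE), ∀ a, ‖f' i a‖ ≤ M' i := by
        intro i hi a
        rcases eq_or_ne i j with rfl | hij
        · rw [hf', hM', Function.update_self, Function.update_self, norm_mul]
          exact mul_le_mul (hb i (hmeml' _ hjl') a) (hb i0 (by simp) a)
            (norm_nonneg _) (hM i (hmeml' _ hjl'))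
        · rw [hf', hM', Function.update_of_ne hij, Function.update_of_ne hij]
          exact hb i (hmeml' _ (hmemP i hi)) a
      have hfresh'' : ∀ i ∈ L1, ‖∑ a ∈ A, f' i a‖ ≤ (m : ℝ) * M' i := by
        intro i hi
        have hij : i ≠ j := ne_of_mem_of_not_mem hi hjL1
        rw [hf', hM', Function.update_of_ne hij, Function.update_of_ne hij]
        exact hfresh i (List.mem_cons_of_mem _ (List.mem_of_mem_erase hi))
      have hIH := ih (L1.length + (j :: lE).length)
        (by rw [hlen1]; simp only [List.length_cons]; omega)
        L1 (j :: lE) A f' M' rfl hndP hM'' hb'' hfresh''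
      have hTeq : T k l' A f' = T k (L1 ++ (j :: lE)) A f' := T_perm k hperm A f'
      rw [hTeq]
      refine hIH.trans_eq ?_
      have hprod : ((L1 ++ (j :: lE)).map M').prod = M i0 * (l'.map M).prod := by
        have e1 : ((L1 ++ (j :: lE)).map M').prod = M' j * (((L1 ++ lE).map M')).prod :=
          prod_map_cons_of_perm List.perm_middle M'
        have e2 : (((L1 ++ lE)).map M').prod = ((L1 ++ lE).map M).prod :=
          prod_map_update hjR M _
        have e3 : (l'.map M).prod = M j * ((L1 ++ lE).map M).prod :=
          prod_map_cons_of_perm hpermR M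
        rw [e1, e2, e3, hM', Function.update_self]
        ring
      rw [hprod, hlen1]
      have hc1 : ((lD'.length - 1 : ℕ) : ℝ) = (lD'.length : ℝ) - 1 := by
        rw [Nat.cast_sub hd1]; norm_num
      have hE : (((j :: lE).length : ℕ) : ℝ) + ((lD'.length - 1 : ℕ) : ℝ)/2
          = (lE.length : ℝ) + 1 + ((lD'.length - 1 : ℕ) : ℝ)/2 := by
        simp only [List.length_cons]; push_cast; ring
      have hBB : (m:ℝ) + ((lD'.length - 1 : ℕ) : ℝ) + (((j :: lE).length : ℕ) : ℝ)
          = (m:ℝ) + (lD'.length : ℝ) + (lE.length : ℝ) := by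
        rw [hc1]; simp only [List.length_cons]; push_cast; ring
      rw [hE, hBB]
    have h3 : ∀ j ∈ lE.toFinset,
        ‖T k l' A (Function.update f j (fun a => f j a * f i0 a))‖
        ≤ (k:ℝ) ^ ((lE.length:ℝ) + (lD'.length:ℝ)/2)
          * ((m:ℝ) + lD'.length + lE.length) ^ lD'.length
          * (M i0 * (l'.map M).prod) := by
      intro j hj
      have hjE : j ∈ lE := List.mem_toFinset.mp hj
      have hjl' : j ∈ l' := List.mem_append_right _ hjE
      have hjD' : j ∉ lD' := fun h => hdisjDE h hjE
      set f' := Function.update f j (fun a => f j a * f i0 a) with hf'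
      set M' := Function.update M j (M j * M i0) with hM'
      set R := lD' ++ lE.erase j with hR
      have hpermR : l'.Perm (j :: R) :=
        ((List.perm_cons_erase hjE).append_left lD').trans List.perm_middle
      have hjR : j ∉ R := by
        have h0 : (j :: R).Nodup := hpermR.nodup_iff.mp hndl'
        exact (List.nodup_cons.mp h0).1
      have hM'' : ∀ i ∈ l', 0 ≤ M' i := by
        intro i hi
        rcases eq_or_ne i j with rfl | hij
        · rw [hM', Function.update_self]
          exact mul_nonneg (hM i (hmeml' _ hjl')) hMi0
        · rw [hM', Function.update_of_ne hij]
          exact hM i (hmeml' _ hi)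
      have hb'' : ∀ i ∈ l', ∀ a, ‖f' i a‖ ≤ M' i := by
        intro i hi a
        rcases eq_or_ne i j with rfl | hij
        · rw [hf', hM', Function.update_self, Function.update_self, norm_mul]
          exact mul_le_mul (hb i (hmeml' _ hjl') a) (hb i0 (by simp) a)
            (norm_nonneg _) (hM i (hmeml' _ hjl'))
        · rw [hf', hM', Function.update_of_ne hij, Function.update_of_ne hij]
          exact hb i (hmeml' _ hi) a
      have hfresh'' : ∀ i ∈ lD', ‖∑ a ∈ A, f' i a‖ ≤ (m : ℝ) * M' i := by
        intro i hi
        have hij : i ≠ j := ne_of_mem_of_not_mem hi hjD'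
        rw [hf', hM', Function.update_of_ne hij, Function.update_of_ne hij]
        exact hfresh i (List.mem_cons_of_mem _ hi)
      have hIH := ih (lD'.length + lE.length) (by omega) lD' lE A f' M' rfl hndl'
        hM'' hb'' hfresh''
      refine hIH.trans_eq ?_
      have hprod : (l'.map M').prod = M i0 * (l'.map M).prod := by
        have e1 : (l'.map M').prod = M' j * ((R.map M')).prod :=
          prod_map_cons_of_perm hpermR M'
        have e2 : (R.map M').prod = (R.map M).prod := prod_map_update hjR M _
        have e3 : (l'.map M).prod = M j * (R.map M).prod := prod_map_cons_of_perm hpermR M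
        rw [e1, e2, e3, hM', Function.update_self]
        ring
      rw [hprod]
    
    -- assemble
    have hTmain : T k (i0 :: l') A f = (∑ a ∈ A, f i0 a) * T k l' A f
        - ∑ j ∈ l'.toFinset, T k l' A (Function.update f j (fun a => f j a * f i0 a)) := by
      rw [T_perm k (List.perm_append_singleton i0 l').symm A f, T_pull k i0 l' hndl A f]
    have hsplit : l'.toFinset = lD'.toFinset ∪ lE.toFinset := List.toFinset_append
    have hdisjF : Disjoint lD'.toFinset lE.toFinset :=
      List.disjoint_toFinset_iff_disjoint.mpr hdisjDE
    have hcardD : lD'.toFinset.card = lD'.length := List.toFinset_card_of_nodup hndD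
    have hcardE : lE.toFinset.card = lE.length := List.toFinset_card_of_nodup hndE
    have hsum2 : ∑ j ∈ lD'.toFinset,
        ‖T k l' A (Function.update f j (fun a => f j a * f i0 a))‖
        ≤ (lD'.length : ℝ) * ((k:ℝ) ^ ((lE.length:ℝ) + 1 + (↑(lD'.length-1))/2)
          * ((m:ℝ) + lD'.length + lE.length) ^ (lD'.length-1)
          * (M i0 * (l'.map M).prod)) := by
      refine (Finset.sum_le_card_nsmul _ _ _ h2).trans_eq ?_
      rw [hcardD, nsmul_eq_mul]
    have hsum3 : ∑ j ∈ lE.toFinset,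
        ‖T k l' A (Function.update f j (fun a => f j a * f i0 a))‖
        ≤ (lE.length : ℝ) * ((k:ℝ) ^ ((lE.length:ℝ) + (lD'.length:ℝ)/2)
          * ((m:ℝ) + lD'.length + lE.length) ^ lD'.length
          * (M i0 * (l'.map M).prod)) := by
      refine (Finset.sum_le_card_nsmul _ _ _ h3).trans_eq ?_
      rw [hcardE, nsmul_eq_mul]
    have hfinprod : (((i0 :: lD') ++ lE).map M).prod = M i0 * (l'.map M).prod := by
      rw [hl'eq]; simp
    calc ‖T k ((i0 :: lD') ++ lE) A f‖
        = ‖(∑ a ∈ A, f i0 a) * T k l' A f - ∑ j ∈ l'.toFinset,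
            T k l' A (Function.update f j (fun a => f j a * f i0 a))‖ := by
          rw [hl'eq, hTmain]
      _ ≤ ‖(∑ a ∈ A, f i0 a) * T k l' A f‖ + ‖∑ j ∈ l'.toFinset,
            T k l' A (Function.update f j (fun a => f j a * f i0 a))‖ := norm_sub_le _ _
      _ = ‖∑ a ∈ A, f i0 a‖ * ‖T k l' A f‖ + ‖∑ j ∈ l'.toFinset,
            T k l' A (Function.update f j (fun a => f j a * f i0 a))‖ := by rw [norm_mul]
      _ ≤ ((m:ℝ) * M i0) * ((k : ℝ) ^ ((lE.length : ℝ) + (lD'.length : ℝ)/2)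
            * ((m : ℝ) + lD'.length + lE.length) ^ lD'.length * (l'.map M).prod)
          + ((lD'.length : ℝ) * ((k:ℝ) ^ ((lE.length:ℝ) + 1 + (↑(lD'.length-1))/2)
              * ((m:ℝ) + lD'.length + lE.length) ^ (lD'.length-1)
              * (M i0 * (l'.map M).prod))
            + (lE.length : ℝ) * ((k:ℝ) ^ ((lE.length:ℝ) + (lD'.length:ℝ)/2)
              * ((m:ℝ) + lD'.length + lE.length) ^ lD'.length
              * (M i0 * (l'.map M).prod))) := by
          refine add_le_add (mul_le_mul (hfresh i0 (by simp)) h1 (norm_nonneg _)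
            (mul_nonneg (Nat.cast_nonneg m) hMi0)) ?_
          refine (norm_sum_le _ _).trans ?_
          rw [hsplit, Finset.sum_union hdisjF]
          exact add_le_add hsum2 hsum3
      _ = (((m:ℝ) + lE.length) * ((k:ℝ) ^ ((lE.length:ℝ) + (lD'.length:ℝ)/2)
            * ((m:ℝ) + lD'.length + lE.length) ^ lD'.length)
          + (lD'.length : ℝ) * ((k:ℝ) ^ ((lE.length:ℝ) + 1 + (↑(lD'.length-1))/2)
            * ((m:ℝ) + lD'.length + lE.length) ^ (lD'.length-1)))
          * (M i0 * (l'.map M).prod) := by ring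
      _ ≤ ((k:ℝ) ^ ((lE.length:ℝ) + ((lD'.length:ℝ)+1)/2)
            * ((m:ℝ) + ((lD'.length:ℝ)+1) + lE.length) ^ (lD'.length+1))
          * (M i0 * (l'.map M).prod) :=
          mul_le_mul_of_nonneg_right (arith_step k m lD'.length lE.length hk)
            (mul_nonneg hMi0 hP')
      _ = (k : ℝ) ^ ((lE.length : ℝ) + ((i0 :: lD').length : ℝ)/2)
          * ((m : ℝ) + (i0 :: lD').length + lE.length) ^ (i0 :: lD').length
          * (((i0 :: lD') ++ lE).map M).prod := by
          rw [hfinprod]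
          simp only [List.length_cons]
          push_cast
          ring

lemma outer_lemma (k m : ℕ) (hk : 1 ≤ k) (h : ℕ → Fin k → ℂ) (M : ℕ → ℝ) (lF : List ℕ)
    (hzero : ∀ i ∈ lF, ∑ a : Fin k, h i a = 0) :
    ∀ (lG : List ℕ) (A : Finset (Fin k)),
    (lG ++ lF).Nodup →
    (∀ i ∈ lG ++ lF, 0 ≤ M i) →
    (∀ i ∈ lG ++ lF, ∀ a, ‖h i a‖ ≤ M i) →
    Aᶜ.card + lG.length ≤ m →
    ‖T k (lG ++ lF) A h‖ ≤ (k:ℝ) ^ lG.length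
      * ((k:ℝ) ^ ((lF.length:ℝ)/2) * ((m:ℝ) + lF.length) ^ lF.length)
      * ((lG ++ lF).map M).prod := by
  intro lG
  induction lG with
  | nil =>
    intro A hnd hM hb hA
    simp only [List.nil_append, List.length_nil, pow_zero, one_mul] at *
    have hfresh : ∀ i ∈ lF, ‖∑ a ∈ A, h i a‖ ≤ (m:ℝ) * M i := by
      intro i hi
      have h0 : ∑ a ∈ A, h i a = - ∑ a ∈ Aᶜ, h i a := by
        have h1 : ∑ a ∈ A, h i a + ∑ a ∈ Aᶜ, h i a = ∑ a : Fin k, h i a :=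
          Finset.sum_add_sum_compl A (h i)
        rw [hzero i hi] at h1
        exact eq_neg_of_add_eq_zero_left h1
      rw [h0, norm_neg]
      calc ‖∑ a ∈ Aᶜ, h i a‖ ≤ ∑ a ∈ Aᶜ, ‖h i a‖ := norm_sum_le _ _
        _ ≤ ∑ _a ∈ Aᶜ, M i := Finset.sum_le_sum (fun a _ => hb i hi a)
        _ = (Aᶜ.card : ℝ) * M i := by rw [Finset.sum_const, nsmul_eq_mul]
        _ ≤ (m : ℝ) * M i := by
            refine mul_le_mul_of_nonneg_right ?_ (hM i hi)
            exact_mod_cast le_trans (Nat.le_add_right _ _) hA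
    have hkey := key_lemma k m hk lF.length lF [] A h M (by simp)
      (by simpa using hnd) (by simpa using hM) (by simpa using hb) hfresh
    simpa using hkey
  | cons j lG' ihG =>
    intro A hnd hM hb hA
    have hmem : ∀ i ∈ lG' ++ lF, i ∈ (j :: lG') ++ lF := fun i hi =>
      List.mem_cons_of_mem _ hi
    have hnd' : (lG' ++ lF).Nodup := (List.nodup_cons.mp hnd).2
    have hMj : 0 ≤ M j := hM j (by simp)
    have hQ : 0 ≤ (k:ℝ) ^ ((lF.length:ℝ)/2) * ((m:ℝ) + lF.length) ^ lF.length := by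
      positivity
    have hprod' : 0 ≤ ((lG' ++ lF).map M).prod :=
      prod_map_nonneg (fun i hi => hM i (hmem i hi))
    have hcard : ∀ a ∈ A, (A.erase a)ᶜ.card + lG'.length ≤ m := by
      intro a ha
      have h1 : (A.erase a).card = A.card - 1 := Finset.card_erase_of_mem ha
      have h2 : (A.erase a)ᶜ.card = k - (A.card - 1) := by
        rw [Finset.card_compl, h1, Fintype.card_fin]
      have h3 : Aᶜ.card = k - A.card := by rw [Finset.card_compl, Fintype.card_fin]
      have h4 : A.card ≤ k := by simpa using Finset.card_le_univ A
      have h5 : 0 < A.card := Finset.card_pos.mpr ⟨a, ha⟩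
      simp only [List.length_cons] at hA
      omega
    have hstep : ∀ a ∈ A, ‖h j a * T k (lG' ++ lF) (A.erase a) h‖
        ≤ M j * ((k:ℝ) ^ lG'.length
          * ((k:ℝ) ^ ((lF.length:ℝ)/2) * ((m:ℝ) + lF.length) ^ lF.length)
          * ((lG' ++ lF).map M).prod) := by
      intro a ha
      rw [norm_mul]
      exact mul_le_mul (hb j (by simp) a)
        (ihG (A.erase a) hnd' (fun i hi => hM i (hmem i hi))
          (fun i hi => hb i (hmem i hi)) (hcard a ha))
        (norm_nonneg _) hMj
    calc ‖T k ((j :: lG') ++ lF) A h‖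
        = ‖∑ a ∈ A, h j a * T k (lG' ++ lF) (A.erase a) h‖ := by
          rw [List.cons_append, T_cons]
      _ ≤ ∑ a ∈ A, ‖h j a * T k (lG' ++ lF) (A.erase a) h‖ := norm_sum_le _ _
      _ ≤ ∑ _a ∈ A, M j * ((k:ℝ) ^ lG'.length
            * ((k:ℝ) ^ ((lF.length:ℝ)/2) * ((m:ℝ) + lF.length) ^ lF.length)
            * ((lG' ++ lF).map M).prod) := Finset.sum_le_sum hstep
      _ = (A.card : ℝ) * (M j * ((k:ℝ) ^ lG'.length
            * ((k:ℝ) ^ ((lF.length:ℝ)/2) * ((m:ℝ) + lF.length) ^ lF.length)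
            * ((lG' ++ lF).map M).prod)) := by rw [Finset.sum_const, nsmul_eq_mul]
      _ ≤ (k : ℝ) * (M j * ((k:ℝ) ^ lG'.length
            * ((k:ℝ) ^ ((lF.length:ℝ)/2) * ((m:ℝ) + lF.length) ^ lF.length)
            * ((lG' ++ lF).map M).prod)) := by
          refine mul_le_mul_of_nonneg_right ?_ (by positivity)
          exact_mod_cast (by simpa using Finset.card_le_univ A : A.card ≤ k)
      _ = (k:ℝ) ^ (j :: lG').length
            * ((k:ℝ) ^ ((lF.length:ℝ)/2) * ((m:ℝ) + lF.length) ^ lF.length)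
            * (((j :: lG') ++ lF).map M).prod := by
          simp only [List.length_cons, List.cons_append, List.map_cons, List.prod_cons,
            pow_succ]
          ring

lemma emb_eval (k : ℕ) (a : ℕ) (t : Finset ℕ) (hat : a ∉ t) (f : ↥t ↪ Fin k) (b : Fin k)
    (hb : b ∉ Set.range ⇑f) (x : ↥(insert a t)) :
    ((Equiv.embeddingCongr (Finset.subtypeInsertEquivOption hat) (Equiv.refl (Fin k))).trans
      (Function.Embedding.optionEmbeddingEquiv (↥t) (Fin k))).symm ⟨f, ⟨b, hb⟩⟩ x
    = if hx : ↑x = a then b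
      else f ⟨↑x, (Finset.mem_insert.mp x.2).resolve_left hx⟩ := by
  simp only [Equiv.symm_trans_apply, Equiv.embeddingCongr_apply,
    Function.Embedding.optionEmbeddingEquiv]
  split_ifs with hx
  · simp [Finset.subtypeInsertEquivOption, hx, Function.Embedding.optionElim]
  · simp [Finset.subtypeInsertEquivOption, hx, Function.Embedding.optionElim]

lemma sum_emb_eq_T (k : ℕ) (h : ℕ → Fin k → ℂ) (s : Finset ℕ) :
    ∀ A : Finset (Fin k),
    (∑ σ : (↥s ↪ Fin k), if ∀ x, σ x ∈ A then ∏ x ∈ s.attach, h ↑x (σ x) else 0)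
      = T k s.toList A h := by
  classical
  induction s using Finset.induction_on with
  | empty =>
    intro A
    have h1 : ∀ σ : (↥(∅:Finset ℕ) ↪ Fin k),
        (if ∀ x, σ x ∈ A then ∏ x ∈ (∅:Finset ℕ).attach, h ↑x (σ x) else 0) = 1 := by
      intro σ
      rw [if_pos (fun x => absurd x.2 (Finset.notMem_empty _))]
      simp
    rw [Finset.sum_congr rfl (fun σ _ => h1 σ), Finset.sum_const, Finset.toList_empty, T_nil,
      Finset.card_univ, Fintype.card_embedding_eq]
    simp
  | @insert a t hat ih =>
    intro A
    have hTperm : T k ((insert a t).toList) A h = T k (a :: t.toList) A h :=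
      T_perm k (Finset.toList_insert hat) A h
    set E := ((Equiv.embeddingCongr (Finset.subtypeInsertEquivOption hat)
      (Equiv.refl (Fin k))).trans
      (Function.Embedding.optionEmbeddingEquiv (↥t) (Fin k))) with hE
    have hsum1 : (∑ σ : (↥(insert a t) ↪ Fin k),
        if ∀ x, σ x ∈ A then ∏ x ∈ (insert a t).attach, h ↑x (σ x) else 0)
        = ∑ p : Σ f : ↥t ↪ Fin k, ↥(Set.range ⇑f)ᶜ,
          (if ∀ x, (E.symm p) x ∈ A then ∏ x ∈ (insert a t).attach, h ↑x ((E.symm p) x)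
            else 0) :=
      (Equiv.sum_comp E.symm _).symm
    rw [hsum1, ← Finset.univ_sigma_univ, Finset.sum_sigma]
    -- per f analysis
    have hmain : ∀ f : ↥t ↪ Fin k,
        (∑ b : ↥(Set.range ⇑f)ᶜ,
          (if ∀ x, (E.symm ⟨f, b⟩) x ∈ A then ∏ x ∈ (insert a t).attach, h ↑x ((E.symm ⟨f, b⟩) x)
            else 0))
        = ∑ b ∈ A, h a b *
            (if ∀ x, f x ∈ A.erase b then ∏ x ∈ t.attach, h ↑x (f x) else 0) := by
      intro f
      set P := ∏ x ∈ t.attach, h ↑x (f x) with hP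
      have hval : ∀ (b : Fin k) (hb : b ∉ Set.range ⇑f),
          (if ∀ x, (E.symm ⟨f, ⟨b, hb⟩⟩) x ∈ A
            then ∏ x ∈ (insert a t).attach, h ↑x ((E.symm ⟨f, ⟨b, hb⟩⟩) x) else 0)
          = if b ∈ A ∧ (∀ x, f x ∈ A) then h a b * P else 0 := by
        intro b hb
        have happ : ∀ x : ↥(insert a t), (E.symm ⟨f, ⟨b, hb⟩⟩) x
            = if hx : ↑x = a then b
              else f ⟨↑x, (Finset.mem_insert.mp x.2).resolve_left hx⟩ :=
          emb_eval k a t hat f b hb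
        have hcond : (∀ x, (E.symm ⟨f, ⟨b, hb⟩⟩) x ∈ A) ↔ (b ∈ A ∧ ∀ x, f x ∈ A) := by
          constructor
          · intro hall
            constructor
            · have := hall ⟨a, Finset.mem_insert_self a t⟩
              rwa [happ, dif_pos rfl] at this
            · intro x
              have hxa : (↑x : ℕ) ≠ a := fun hc => hat (hc ▸ x.2)
              have := hall ⟨↑x, Finset.mem_insert_of_mem x.2⟩
              rw [happ, dif_neg hxa] at this
              exact this
          · rintro ⟨hbA, hC⟩ x
            rw [happ]
            split_ifs
            · exact hbA
            · exact hC _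
        have hprod : (∏ x ∈ (insert a t).attach, h ↑x ((E.symm ⟨f, ⟨b, hb⟩⟩) x))
            = h a b * P := by
          set σ := E.symm ⟨f, ⟨b, hb⟩⟩ with hσ
          set ρ : ℕ → Fin k := fun i => if hi : i ∈ insert a t then σ ⟨i, hi⟩ else b with hρ
          have e1 : (∏ x ∈ (insert a t).attach, h ↑x (σ x))
              = ∏ i ∈ insert a t, h i (ρ i) := by
            rw [← Finset.prod_attach (insert a t) (fun i => h i (ρ i))]
            refine Finset.prod_congr rfl fun x _ => ?_
            simp only [hρ, dif_pos x.2]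
          have e3 : ∏ i ∈ insert a t, h i (ρ i) = h a (ρ a) * ∏ i ∈ t, h i (ρ i) :=
            Finset.prod_insert hat
          have e4 : ρ a = b := by
            rw [hρ]
            simp only [dif_pos (Finset.mem_insert_self a t)]
            rw [happ, dif_pos rfl]
          have e6 : ∏ i ∈ t, h i (ρ i) = P := by
            rw [hP, ← Finset.prod_attach t (fun i => h i (ρ i))]
            refine Finset.prod_congr rfl fun x _ => ?_
            have hxa : (↑x : ℕ) ≠ a := fun hc => hat (hc ▸ x.2)
            simp only [hρ, dif_pos (Finset.mem_insert_of_mem x.2)]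
            rw [happ, dif_neg hxa]
          rw [e1, e3, e4, e6]
        rw [hprod]
        exact if_congr hcond rfl rfl
      -- sum over subtype to sum over A
      have hsub : (∑ b : ↥(Set.range ⇑f)ᶜ,
          (if ∀ x, (E.symm ⟨f, b⟩) x ∈ A then ∏ x ∈ (insert a t).attach, h ↑x ((E.symm ⟨f, b⟩) x)
            else 0))
          = ∑ b : ↥(Set.range ⇑f)ᶜ,
            (if (↑b ∈ A ∧ ∀ x, f x ∈ A) then h a ↑b * P else 0) := by
        refine Finset.sum_congr rfl fun b _ => ?_
        obtain ⟨b, hb⟩ := b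
        exact hval b hb
      rw [hsub]
      have hsub2 : (∑ b : ↥(Set.range ⇑f)ᶜ,
          (if (↑b ∈ A ∧ ∀ x, f x ∈ A) then h a ↑b * P else 0))
          = ∑ b ∈ (Set.range ⇑f)ᶜ.toFinset,
            (if (b ∈ A ∧ ∀ x, f x ∈ A) then h a b * P else 0) :=
        Finset.sum_set_coe (f := fun b => if (b ∈ A ∧ ∀ x, f x ∈ A) then h a b * P else 0)
          (s := (Set.range ⇑f)ᶜ)
      have hsub3 : (∑ b ∈ (Set.range ⇑f)ᶜ.toFinset,
          (if (b ∈ A ∧ ∀ x, f x ∈ A) then h a b * P else 0))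
          = ∑ b : Fin k, (if b ∈ (Set.range ⇑f)ᶜ.toFinset
              then (if (b ∈ A ∧ ∀ x, f x ∈ A) then h a b * P else 0) else 0) := by
        rw [Finset.sum_ite_mem, Finset.univ_inter]
      rw [hsub2, hsub3]
      have hpt : ∀ b : Fin k,
          (if b ∈ (Set.range ⇑f)ᶜ.toFinset then (if (b ∈ A ∧ ∀ x, f x ∈ A) then h a b * P else 0) else 0)
          = (if b ∈ A then h a b * (if ∀ x, f x ∈ A.erase b then P else 0) else 0) := by
        intro b
        have hiff : (∀ x, f x ∈ A.erase b) ↔ ((∀ x, f x ∈ A) ∧ b ∉ Set.range ⇑f) := by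
          simp only [Finset.mem_erase, Set.mem_range, not_exists, forall_and, ne_eq]
          constructor
          · rintro ⟨h1, h2⟩; exact ⟨h2, fun x hc => h1 x hc⟩
          · rintro ⟨h1, h2⟩; exact ⟨fun x hc => h2 x hc, h1⟩
        simp only [hiff, Set.mem_toFinset, Set.mem_compl_iff]
        by_cases h1 : b ∈ A <;> by_cases h2 : b ∈ Set.range ⇑f <;>
          by_cases h3 : ∀ x, f x ∈ A <;> simp [h1, h2, h3]
      rw [Finset.sum_congr rfl (fun b _ => hpt b), Finset.sum_ite_mem, Finset.univ_inter]
    rw [Finset.sum_congr rfl (fun f _ => hmain f), Finset.sum_comm, hTperm, T_cons]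
    refine Finset.sum_congr rfl fun b _ => ?_
    rw [← Finset.mul_sum]
    congr 1
    exact ih (A.erase b)

/-- Let `F, G` be disjoint finite sets of naturals with `|F| = n`, `|G| = m`,
`H = {1,…,k}`, and `f_i, g_j : H → ℂ` with `∑_a f_i(a) = 0` for every `i ∈ F`.
Then `|∑_{σ : F ∪ G ↪ H} (∏_{i∈F} f_i(σ(i)))(∏_{j∈G} g_j(σ(j)))|
  ≤ k^{m+n/2} (n+m)^n ∏_{i∈F} ‖f_i‖_∞ ∏_{j∈G} ‖g_j‖_∞`. -/
theorem sum_over_injections_bound (n m k : ℕ) (hk : 0 < k)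
    (F G : Finset ℕ) (hFG : Disjoint F G) (hF : F.card = n) (hG : G.card = m)
    (f g : ℕ → Fin k → ℂ)
    (hf0 : ∀ i ∈ F, ∑ a, f i a = 0) :
    ‖∑ σ : ((F ∪ G : Finset ℕ) : Type) ↪ Fin k,
        (∏ i : F, f i (σ ⟨i.1, Finset.mem_union_left G i.2⟩)) *
        ∏ j : G, g j (σ ⟨j.1, Finset.mem_union_right F j.2⟩)‖
      ≤ (k : ℝ) ^ ((m : ℝ) + n / 2) * ((n : ℝ) + m) ^ n *
        (∏ i : F, ⨆ a, ‖f i a‖) * ∏ j : G, ⨆ a, ‖g j a‖ := by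
  classical
  set h : ℕ → Fin k → ℂ := fun i => if i ∈ F then f i else g i with hh
  set M : ℕ → ℝ := fun i => if i ∈ F then ⨆ a, ‖f i a‖ else ⨆ a, ‖g i a‖ with hM
  have hMnn : ∀ i, 0 ≤ M i := by
    intro i
    simp only [hM]
    split_ifs
    · exact Real.iSup_nonneg (fun a => norm_nonneg _)
    · exact Real.iSup_nonneg (fun a => norm_nonneg _)
  have hbdd : ∀ i a, ‖h i a‖ ≤ M i := by
    intro i a
    simp only [hh, hM]
    split_ifs
    · exact le_ciSup (f := fun b => ‖f i b‖) (Set.Finite.bddAbove (Set.finite_range _)) a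
    · exact le_ciSup (f := fun b => ‖g i b‖) (Set.Finite.bddAbove (Set.finite_range _)) a
  -- step 1 : rewrite the summand
  have hsummand : ∀ σ : ((F ∪ G : Finset ℕ) : Type) ↪ Fin k,
      (∏ i : F, f i (σ ⟨i.1, Finset.mem_union_left G i.2⟩)) *
        ∏ j : G, g j (σ ⟨j.1, Finset.mem_union_right F j.2⟩)
      = (if ∀ x, σ x ∈ (Finset.univ : Finset (Fin k))
          then ∏ x ∈ (F ∪ G).attach, h ↑x (σ x) else 0) := by
    intro σ
    rw [if_pos (fun x => Finset.mem_univ _)]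
    set ρ : ℕ → Fin k := fun i => if hi : i ∈ F ∪ G then σ ⟨i, hi⟩ else ⟨0, hk⟩ with hρ
    have e1 : ∏ x ∈ (F ∪ G).attach, h ↑x (σ x) = ∏ i ∈ F ∪ G, h i (ρ i) := by
      rw [← Finset.prod_attach (F ∪ G) (fun i => h i (ρ i))]
      refine Finset.prod_congr rfl fun x _ => ?_
      simp only [hρ, dif_pos x.2]
    have e2 : ∏ i ∈ F ∪ G, h i (ρ i) = (∏ i ∈ F, h i (ρ i)) * ∏ j ∈ G, h j (ρ j) :=
      Finset.prod_union hFG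
    have e3 : ∏ i ∈ F, h i (ρ i) = ∏ i : F, f i (σ ⟨i.1, Finset.mem_union_left G i.2⟩) := by
      rw [Finset.univ_eq_attach, ← Finset.prod_attach F (fun i => h i (ρ i))]
      refine Finset.prod_congr rfl fun x _ => ?_
      simp only [hh, hρ, if_pos x.2, dif_pos (Finset.mem_union_left G x.2)]
    have e4 : ∏ j ∈ G, h j (ρ j) = ∏ j : G, g j (σ ⟨j.1, Finset.mem_union_right F j.2⟩) := by
      rw [Finset.univ_eq_attach, ← Finset.prod_attach G (fun i => h i (ρ i))]
      refine Finset.prod_congr rfl fun x _ => ?_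
      have hxF : (↑x : ℕ) ∉ F := fun hc => (Finset.disjoint_left.mp hFG) hc x.2
      simp only [hh, hρ, if_neg hxF, dif_pos (Finset.mem_union_right F x.2)]
    rw [e1, e2, e3, e4]
  rw [Finset.sum_congr rfl (fun σ _ => hsummand σ), sum_emb_eq_T k h (F ∪ G) Finset.univ]
  -- step 2 : permute
  have hperm : ((F ∪ G).toList).Perm (G.toList ++ F.toList) := by
    rw [← Multiset.coe_eq_coe]
    have c1 : ((G.toList ++ F.toList : List ℕ) : Multiset ℕ) = ↑G.toList + ↑F.toList := by
      exact_mod_cast (Multiset.coe_add G.toList F.toList).symm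
    rw [c1, Finset.coe_toList, Finset.coe_toList, Finset.coe_toList,
      ← Finset.disjUnion_eq_union F G hFG]
    exact add_comm F.val G.val
  rw [T_perm k hperm Finset.univ h]
  -- step 3 : outer lemma
  have hnod : (G.toList ++ F.toList).Nodup := by
    rw [List.nodup_append']
    refine ⟨Finset.nodup_toList G, Finset.nodup_toList F, ?_⟩
    intro x hxG hxF
    exact (Finset.disjoint_left.mp hFG) (by simpa using hxF) (by simpa using hxG)
  have hzero : ∀ i ∈ F.toList, ∑ a : Fin k, h i a = 0 := by
    intro i hi
    have hiF : i ∈ F := by simpa using hi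
    rw [hh]
    simp only [if_pos hiF]
    exact hf0 i hiF
  have houter := outer_lemma k m (by omega) h M F.toList hzero G.toList Finset.univ hnod
    (fun i _ => hMnn i) (fun i _ a => hbdd i a)
    (by simp [Finset.length_toList, hG])
  have hlF : F.toList.length = n := by rw [Finset.length_toList, hF]
  have hlG : G.toList.length = m := by rw [Finset.length_toList, hG]
  rw [hlF, hlG] at houter
  refine houter.trans_eq ?_
  have hprodF : (F.toList.map M).prod = ∏ i : F, ⨆ a, ‖f i a‖ := by
    rw [Finset.prod_map_toList, Finset.univ_eq_attach, ← Finset.prod_attach F M]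
    exact Finset.prod_congr rfl fun x _ => by simp only [hM, if_pos x.2]
  have hprodG : (G.toList.map M).prod = ∏ j : G, ⨆ a, ‖g j a‖ := by
    rw [Finset.prod_map_toList, Finset.univ_eq_attach, ← Finset.prod_attach G M]
    refine Finset.prod_congr rfl fun x _ => ?_
    have hxF : (↑x : ℕ) ∉ F := fun hc => (Finset.disjoint_left.mp hFG) hc x.2
    simp only [hM, if_neg hxF]
  have hsplit2 : (k:ℝ) ^ ((m:ℝ) + (n:ℝ)/2) = (k:ℝ)^(m:ℕ) * (k:ℝ)^((n:ℝ)/2) := by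
    rw [Real.rpow_add (by exact_mod_cast hk : (0:ℝ) < (k:ℝ)), Real.rpow_natCast]
  rw [List.map_append, List.prod_append, hprodF, hprodG, hsplit2, add_comm (m:ℝ) (n:ℝ)]
  ring
end

section
/- For a positive integer m ≤ k and distinct indices: if the index set {i₁,…,iₘ} has cardinality exactly m, then the integral over U(k) of |f_{i₁j₁}(u)|²⋯|f_{iₘjₘ}(u)|² dμ_k(u) is at most 1/P(k,m) ≤ m^m/k^m. -/
open MeasureTheory

lemma permMatrix_mem (k : ℕ) (σ : Equiv.Perm (Fin k)) :
    (σ.toPEquiv.toMatrix : Matrix (Fin k) (Fin k) ℂ) ∈ Matrix.unitaryGroup (Fin k) ℂ := by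
  rw [Matrix.mem_unitaryGroup_iff']
  have hT : (σ.toPEquiv.toMatrix : Matrix (Fin k) (Fin k) ℂ).conjTranspose
      = ((σ⁻¹).toPEquiv.toMatrix : Matrix (Fin k) (Fin k) ℂ) := by
    ext a b
    simp only [Matrix.conjTranspose_apply, PEquiv.toMatrix, Equiv.toPEquiv_apply,
      Option.mem_def, Option.some.injEq, apply_ite (starRingEnd ℂ), map_one, map_zero]
    have : (σ b = a) ↔ (σ⁻¹ a = b) := by
      constructor <;> intro h <;> simp [← h]
    simp [this]
  rw [Matrix.star_eq_conjTranspose, hT, ← PEquiv.toMatrix_trans, ← Equiv.toPEquiv_trans]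
  rw [show Equiv.trans σ⁻¹ σ = Equiv.refl (Fin k) from Equiv.symm_trans_self σ]
  rw [Equiv.toPEquiv_refl, PEquiv.toMatrix_refl]

lemma col_sum_one (k : ℕ) (u : Matrix.unitaryGroup (Fin k) ℂ) (c : Fin k) :
    ∑ a, ‖(u : Matrix (Fin k) (Fin k) ℂ) a c‖ ^ 2 = 1 := by
  have h : (star (u : Matrix (Fin k) (Fin k) ℂ) * u) c c = 1 := by
    rw [u.2.1]; simp
  rw [Matrix.mul_apply] at h
  have heq : ∀ a, (star (u : Matrix (Fin k) (Fin k) ℂ)) c a * (u : Matrix (Fin k) (Fin k) ℂ) a c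
      = ((‖(u : Matrix (Fin k) (Fin k) ℂ) a c‖ ^ 2 : ℝ) : ℂ) := by
    intro a
    rw [Matrix.star_apply, RCLike.star_def, Complex.normSq_eq_conj_mul_self.symm,
      Complex.normSq_eq_norm_sq]
  rw [Finset.sum_congr rfl (fun a _ => heq a)] at h
  exact_mod_cast h

lemma exists_perm_comp {m k : ℕ} (e e' : Fin m ↪ Fin k) :
    ∃ σ : Equiv.Perm (Fin k), ∀ l, σ (e l) = e' l := by
  classical
  let q : Fin m ≃ {x // x ∈ Set.range e} := e.toEquivRange
  let q' : Fin m ≃ {x // x ∈ Set.range e'} := e'.toEquivRange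
  refine ⟨(q.symm.trans q').extendSubtype, fun l => ?_⟩
  rw [Equiv.extendSubtype_apply_of_mem _ _ ⟨l, rfl⟩]
  simp only [Equiv.trans_apply, q, q']
  rw [show (⟨e l, ⟨l, rfl⟩⟩ : {x // x ∈ Set.range e}) = e.toEquivRange l from
    (e.toEquivRange_apply l).symm]
  rw [Equiv.symm_apply_apply]
  rw [e'.toEquivRange_apply l]

/-- For positive integers `m ≤ k`, if the row indices `i₁,…,iₘ` are pairwise
distinct, then `∫ |f_{i₁j₁}(u)|²⋯|f_{iₘjₘ}(u)|² dμₖ(u) ≤ 1/P(k,m) ≤ m^m/k^m`,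
where `P(k,m) = k(k-1)⋯(k-m+1)`. -/
theorem haar_abs_sq_moment_distinct_bound (m k : ℕ) (hm : 0 < m) (hk : m ≤ k)
    (μ : Measure (Matrix.unitaryGroup (Fin k) ℂ))
    [μ.IsHaarMeasure] [IsProbabilityMeasure μ]
    (i j : Fin m → Fin k) (hi : Function.Injective i) :
    (∫ u, ∏ l, ‖(u : Matrix (Fin k) (Fin k) ℂ) (i l) (j l)‖ ^ 2 ∂μ)
        ≤ 1 / (k.descFactorial m) ∧
      (1 : ℝ) / (k.descFactorial m) ≤ (m : ℝ) ^ m / (k : ℝ) ^ m := by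
  classical
  set G := Matrix.unitaryGroup (Fin k) ℂ
  have hdpos : 0 < k.descFactorial m := by
    rcases Nat.eq_zero_or_pos (k.descFactorial m) with h | h
    · exact absurd (Nat.descFactorial_eq_zero_iff_lt.mp h) (not_lt.mpr hk)
    · exact h
  constructor
  · -- main integral bound
    set F : (Fin m ↪ Fin k) → G → ℝ :=
      fun e u => ∏ l, ‖(u : Matrix (Fin k) (Fin k) ℂ) (e l) (j l)‖ ^ 2 with hF
    have hFcont : ∀ e, Continuous (F e) := by
      intro e
      apply continuous_finset_prod
      intro l _
      exact (((continuous_apply (j l)).comp ((continuous_apply (e l)).comp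
        (continuous_subtype_val (p := (· ∈ G))))).norm).pow 2
    have hFnn : ∀ e u, 0 ≤ F e u := fun e u =>
      Finset.prod_nonneg fun l _ => by positivity
    have hFle : ∀ e u, F e u ≤ 1 := by
      intro e u
      apply Finset.prod_le_one (fun l _ => by positivity)
      intro l _
      have h1 : ‖(u : Matrix (Fin k) (Fin k) ℂ) (e l) (j l)‖ ≤ 1 :=
        entry_norm_bound_of_unitary u.2 _ _
      nlinarith [norm_nonneg ((u : Matrix (Fin k) (Fin k) ℂ) (e l) (j l))]
    have hFint : ∀ e, Integrable (F e) μ := by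
      intro e
      refine ⟨(hFcont e).aestronglyMeasurable, ?_⟩
      apply HasFiniteIntegral.of_bounded (C := 1)
      exact ae_of_all _ fun u => by
        rw [Real.norm_eq_abs, abs_of_nonneg (hFnn e u)]; exact hFle e u
    -- all integrals equal
    have hconst : ∀ e e' : Fin m ↪ Fin k, ∫ u, F e u ∂μ = ∫ u, F e' u ∂μ := by
      intro e e'
      obtain ⟨σ, hσ⟩ := exists_perm_comp e e'
      set g : G := ⟨σ.toPEquiv.toMatrix, permMatrix_mem k σ⟩ with hg
      have hmul : ∀ u : G, F e (g * u) = F e' u := by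
        intro u
        have : ((g * u : G) : Matrix (Fin k) (Fin k) ℂ)
            = ((u : Matrix (Fin k) (Fin k) ℂ)).submatrix σ id := by
          show (σ.toPEquiv.toMatrix * (u : Matrix (Fin k) (Fin k) ℂ)) = _
          exact PEquiv.toMatrix_toPEquiv_mul σ _
        simp only [hF, this, Matrix.submatrix_apply, id, hσ]
      have hmap : μ.map (fun u => g * u) = μ :=
        MeasureTheory.map_mul_left_eq_self μ g
      calc ∫ u, F e u ∂μ = ∫ u, F e u ∂(μ.map (fun u => g * u)) := by rw [hmap]
        _ = ∫ u, F e (g * u) ∂μ := by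
            rw [integral_map ((continuous_mul_left g).measurable.aemeasurable)
              ((hFcont e).aestronglyMeasurable)]
        _ = ∫ u, F e' u ∂μ := by simp only [hmul]
    -- pointwise sum bound
    have hsum : ∀ u : G, ∑ e : Fin m ↪ Fin k, F e u ≤ 1 := by
      intro u
      have h1 : ∑ e : Fin m ↪ Fin k, F e u
          ≤ ∑ f : Fin m → Fin k, ∏ l, ‖(u : Matrix (Fin k) (Fin k) ℂ) (f l) (j l)‖ ^ 2 := by
        have hinj : ∀ e ∈ (Finset.univ : Finset (Fin m ↪ Fin k)), ∀ e' ∈ Finset.univ,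
            (fun x : Fin m ↪ Fin k => (x : Fin m → Fin k)) e
              = (fun x : Fin m ↪ Fin k => (x : Fin m → Fin k)) e' → e = e' := by
          intro e _ e' _ h
          exact DFunLike.coe_injective h
        have himg := Finset.sum_image
          (g := fun e : Fin m ↪ Fin k => (e : Fin m → Fin k))
          (f := fun f : Fin m → Fin k => ∏ l, ‖(u : Matrix (Fin k) (Fin k) ℂ) (f l) (j l)‖ ^ 2)
          hinj
        rw [show (∑ e : Fin m ↪ Fin k, F e u)
            = ∑ f ∈ Finset.univ.image (fun e : Fin m ↪ Fin k => (e : Fin m → Fin k)),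
              ∏ l, ‖(u : Matrix (Fin k) (Fin k) ℂ) (f l) (j l)‖ ^ 2 from himg.symm]
        apply Finset.sum_le_sum_of_subset_of_nonneg (Finset.subset_univ _)
        intro f _ _
        exact Finset.prod_nonneg fun l _ => by positivity
      have h2 : ∑ f : Fin m → Fin k, ∏ l, ‖(u : Matrix (Fin k) (Fin k) ℂ) (f l) (j l)‖ ^ 2
          = ∏ l, ∑ a, ‖(u : Matrix (Fin k) (Fin k) ℂ) a (j l)‖ ^ 2 := by
        rw [Finset.prod_univ_sum]
        rw [← Fintype.piFinset_univ]
      have h3 : ∏ l : Fin m, ∑ a, ‖(u : Matrix (Fin k) (Fin k) ℂ) a (j l)‖ ^ 2 = 1 := by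
        rw [Finset.prod_congr rfl (fun l _ => col_sum_one k u (j l))]
        simp
      calc ∑ e : Fin m ↪ Fin k, F e u ≤ _ := h1
        _ = 1 := h2.trans h3
    -- put together
    set e₀ : Fin m ↪ Fin k := ⟨i, hi⟩ with he₀
    have hcard : (Fintype.card (Fin m ↪ Fin k) : ℝ) = (k.descFactorial m : ℝ) := by
      rw [Fintype.card_embedding_eq, Fintype.card_fin, Fintype.card_fin]
    have hbig : (k.descFactorial m : ℝ) * ∫ u, F e₀ u ∂μ ≤ 1 := by
      have : ∑ e : Fin m ↪ Fin k, ∫ u, F e u ∂μ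
          = (Fintype.card (Fin m ↪ Fin k) : ℝ) * ∫ u, F e₀ u ∂μ := by
        rw [Finset.sum_congr rfl (fun e _ => hconst e e₀)]
        simp [Finset.card_univ, mul_comm]
      rw [← hcard, ← this, ← integral_finset_sum _ (fun e _ => hFint e)]
      calc ∫ u, ∑ e : Fin m ↪ Fin k, F e u ∂μ ≤ ∫ _u, (1 : ℝ) ∂μ := by
            apply integral_mono (integrable_finset_sum _ (fun e _ => hFint e))
              (integrable_const 1)
            exact hsum
        _ = 1 := by simp
    have hd : (0 : ℝ) < (k.descFactorial m : ℝ) := by exact_mod_cast hdpos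
    rw [le_div_iff₀ hd]
    calc (∫ u, F e₀ u ∂μ) * (k.descFactorial m : ℝ)
        = (k.descFactorial m : ℝ) * ∫ u, F e₀ u ∂μ := mul_comm _ _
      _ ≤ 1 := hbig
  · -- arithmetic
    have hknat : k ^ m ≤ m ^ m * k.descFactorial m := by
      have h1 : (k + 1 - m) ^ m ≤ k.descFactorial m := k.pow_sub_le_descFactorial m
      have h2 : k ≤ m * (k + 1 - m) := by
        have h3 : k + 1 - m = k - m + 1 := by omega
        rw [h3, Nat.mul_add, Nat.mul_one]
        have := Nat.le_mul_of_pos_left (k - m) hm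
        omega
      calc k ^ m ≤ (m * (k + 1 - m)) ^ m := Nat.pow_le_pow_left h2 m
        _ = m ^ m * (k + 1 - m) ^ m := mul_pow m (k + 1 - m) m
        _ ≤ m ^ m * k.descFactorial m := Nat.mul_le_mul_left _ h1
    have hkpos : (0 : ℝ) < (k : ℝ) ^ m := by
      have : 0 < k := lt_of_lt_of_le hm hk
      positivity
    have hd : (0 : ℝ) < (k.descFactorial m : ℝ) := by exact_mod_cast hdpos
    rw [div_le_div_iff₀ hd hkpos, one_mul]
    calc ((k : ℝ)) ^ m = ((k ^ m : ℕ) : ℝ) := by push_cast; ring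
      _ ≤ ((m ^ m * k.descFactorial m : ℕ) : ℝ) := by exact_mod_cast hknat
      _ = (m : ℝ) ^ m * (k.descFactorial m : ℝ) := by push_cast; ring
end
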